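/- For every L ∈ ℕ, all K₁, K₂ ∈ {1, …, L−1} with K₁ < K₂, every T₁ ∈ {1, …, K₁}, every T₂ ∈ {1, …, K₂}, and every N ∈ {1, …, L}, there exists a finite vocabulary V (one may take |V| = 3) and a probability distribution p on Y = V^L, tie-free for both (K₁, T₁) and (K₂, T₂), such that the K₁_{T₁}-lookahead output D_{K₁,T₁}(p) minimizes the expected N-gram Hamming loss E_{y∼p}[ℓ_N(·, y)] over Y, while the K₂_{T₂}-lookahead output D_{K₂,T₂}(p) does not. That is, the class of distributions for which K_T-lookahead is N-gram Hamming optimal is not monotone in K. -/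

import Mathlib

/- The N-gram Hamming loss: the number of positions `i ∈ {0, …, L-N}` (0-indexed) at which
the length-`N` subsequences of `a` and `b` starting at `i` differ. -/
open Classical in
noncomputable def ngramLoss {V : Type*} {L : ℕ} (N : ℕ) (a b : Fin L → V) : ℝ :=
  ∑ i ∈ Finset.range (L - N + 1),
    if ∀ k : ℕ, k < N → ∀ h : i + k < L, a ⟨i + k, h⟩ = b ⟨i + k, h⟩ then 0 else 1

/- `gscore N p a = Σ_{i=0}^{L-N} P_{z∼p}(z_{i:i+N-1} = a_{i:i+N-1})`. -/
open Classical in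
noncomputable def gscore {V : Type*} [Fintype V] {L : ℕ} (N : ℕ)
    (p : (Fin L → V) → ℝ) (a : Fin L → V) : ℝ :=
  ∑ i ∈ Finset.range (L - N + 1),
    ∑ z : Fin L → V,
      if ∀ k : ℕ, k < N → ∀ h : i + k < L, z ⟨i + k, h⟩ = a ⟨i + k, h⟩ then p z else 0

/- prefixProb p w = P_{z∼p}(w is a prefix of z), for a distribution p on Y = V^L. -/
open Classical in
noncomputable def prefixProb {V : Type*} [Fintype V] {L : ℕ}
    (p : (Fin L → V) → ℝ) (w : List V) : ℝ :=
  ∑ y : Fin L → V, if w <+: List.ofFn y then p y else 0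

/- condProb p w t = p(t | w) = P(w·t prefix) / P(w prefix). -/
noncomputable def condProb {V : Type*} [Fintype V] {L : ℕ}
    (p : (Fin L → V) → ℝ) (w t : List V) : ℝ :=
  prefixProb p (w ++ t) / prefixProb p w

/- One iteration of the K_T-lookahead decoder: from prefix w of length m < L, with
c = min(K, L-m), pick a maximizer t of p(t|w) over tuples of length c and append its
first min(T, L-m) tokens. -/
def LookStep {V : Type*} [Fintype V] {L : ℕ} (K T : ℕ)
    (p : (Fin L → V) → ℝ) (w w' : List V) : Prop :=
  w.length < L ∧ ∃ t : List V, t.length = min K (L - w.length) ∧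
    (∀ t' : List V, t'.length = min K (L - w.length) → condProb p w t' ≤ condProb p w t) ∧
    w' = w ++ t.take (min T (L - w.length))

/- A prefix is reachable if the decoder can visit it starting from the empty prefix. -/
def Reachable {V : Type*} [Fintype V] {L : ℕ} (K T : ℕ)
    (p : (Fin L → V) → ℝ) (w : List V) : Prop :=
  Relation.ReflTransGen (LookStep (L := L) K T p) [] w

/- y ∈ V^L is an output of the K_T-lookahead decoder run on p. -/
def IsLookahead {V : Type*} [Fintype V] {L : ℕ} (K T : ℕ)
    (p : (Fin L → V) → ℝ) (y : Fin L → V) : Prop :=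
  Reachable K T p (List.ofFn y)

/- p is tie-free for (K,T): every argmax along the decoder's path is unique. -/
def TieFree {V : Type*} [Fintype V] {L : ℕ} (K T : ℕ)
    (p : (Fin L → V) → ℝ) : Prop :=
  ∀ w : List V, Reachable K T p w → w.length < L →
    ∃! t : List V, t.length = min K (L - w.length) ∧
      ∀ t' : List V, t'.length = min K (L - w.length) → condProb p w t' ≤ condProb p w t

/- STATEMENT 6: non-monotonicity in K. For all 1 ≤ K₁ < K₂ ≤ L-1, T₁ ∈ [K₁], T₂ ∈ [K₂],
N ∈ [L], there is a vocabulary (take V = Fin 3) and a distribution p on Y = V^L, tie-free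
for both (K₁,T₁) and (K₂,T₂), such that the K₁_{T₁}-lookahead output minimizes the expected
N-gram Hamming loss over Y while the K₂_{T₂}-lookahead output does not. -/
namespace S6

def cont {L : ℕ} (X : Fin L → Fin 3) (m c : ℕ) : List (Fin 3) :=
  ((List.ofFn X).take (m+c)).drop m

lemma cont_length {L : ℕ} (X : Fin L → Fin 3) {m c : ℕ} (h : m + c ≤ L) :
    (cont X m c).length = c := by
  simp [cont]; omega

lemma cont_getElem {L : ℕ} (X : Fin L → Fin 3) {m c : ℕ} (h : m + c ≤ L)
    {j : ℕ} (hj : j < (cont X m c).length) :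
    (cont X m c)[j] = X ⟨m+j, by simp [cont] at hj; omega⟩ := by
  have hj' := hj
  simp [cont] at hj'
  simp [cont, List.getElem_drop, List.getElem_take, List.getElem_ofFn]

lemma cont_eq_iff {L : ℕ} {X X' : Fin L → Fin 3} {m c : ℕ} (h : m + c ≤ L) :
    cont X m c = cont X' m c ↔ ∀ i (hi : i < L), m ≤ i → i < m + c → X ⟨i,hi⟩ = X' ⟨i,hi⟩ := by
  constructor
  · intro he i hi h1 h2
    have hj : i - m < (cont X m c).length := by rw [cont_length _ h]; omega
    have hj' : i - m < (cont X' m c).length := by rw [cont_length _ h]; omega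
    have key : X ⟨m+(i-m), by omega⟩ = X' ⟨m+(i-m), by omega⟩ := by
      rw [← cont_getElem X h hj, ← cont_getElem X' h hj']
      exact List.getElem_of_eq he hj
    simpa [Nat.add_sub_cancel' h1] using key
  · intro hp
    apply List.ext_getElem (by rw [cont_length _ h, cont_length _ h])
    intro j h1 h2
    have hj : j < c := by rw [cont_length _ h] at h1; exact h1
    rw [cont_getElem X h h1, cont_getElem X' h h2]
    exact hp _ (by omega) (by omega) (by omega)

lemma take_prefix_iff {L : ℕ} {X x : Fin L → Fin 3} {m : ℕ} (hm : m ≤ L) :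
    ((List.ofFn X).take m <+: List.ofFn x) ↔ ∀ i (h : i < L), i < m → X ⟨i,h⟩ = x ⟨i,h⟩ := by
  rw [List.prefix_iff_eq_take]
  have hl : ((List.ofFn X).take m).length = m := by simp; omega
  rw [hl]
  constructor
  · intro he i hi him
    have h1 : i < ((List.ofFn X).take m).length := by rw [hl]; exact him
    have h2 : i < ((List.ofFn x).take m).length := by simp; omega
    have e1 : ((List.ofFn X).take m)[i]'h1 = X ⟨i, hi⟩ := by
      rw [List.getElem_take]; exact List.getElem_ofFn _
    have e2 : ((List.ofFn x).take m)[i]'h2 = x ⟨i, hi⟩ := by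
      rw [List.getElem_take]; exact List.getElem_ofFn _
    have hge := List.getElem_of_eq he h1
    rw [e1, e2] at hge
    exact hge
  · intro hp
    apply List.ext_getElem (by simp)
    intro j h1 h2
    have hjm : j < m := by simpa [hl] using h1
    have hjL : j < L := by omega
    have e1 : ((List.ofFn X).take m)[j]'h1 = X ⟨j, hjL⟩ := by
      rw [List.getElem_take]; exact List.getElem_ofFn _
    have e2 : ((List.ofFn x).take m)[j]'h2 = x ⟨j, hjL⟩ := by
      rw [List.getElem_take]; exact List.getElem_ofFn _
    rw [e1, e2]; exact hp _ _ hjm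

lemma take_split {L : ℕ} (x : Fin L → Fin 3) (m c : ℕ) :
    (List.ofFn x).take m ++ cont x m c = (List.ofFn x).take (m+c) := by
  rw [cont]
  conv_rhs => rw [← List.take_append_drop m ((List.ofFn x).take (m+c))]
  rw [List.take_take, min_eq_left (Nat.le_add_right m c)]

lemma append_prefix_iff {L : ℕ} {X x : Fin L → Fin 3} {m c : ℕ} (hm : m ≤ L) (hc : m + c ≤ L)
    {t' : List (Fin 3)} (ht' : t'.length = c) :
    ((List.ofFn X).take m ++ t' <+: List.ofFn x) ↔
      (((List.ofFn X).take m <+: List.ofFn x) ∧ t' = cont x m c) := by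
  have hlw : ((List.ofFn X).take m).length = m := by simp; omega
  constructor
  · intro h
    rw [List.prefix_iff_eq_take] at h
    have hlen : ((List.ofFn X).take m ++ t').length = m + c := by simp [hlw, ht']
    rw [hlen, ← take_split x m c] at h
    have := List.append_inj h (by rw [hlw]; simp; omega)
    refine ⟨?_, this.2⟩
    rw [this.1]; exact List.take_prefix _ _
  · rintro ⟨h1, rfl⟩
    rw [List.prefix_iff_eq_take, hlw] at h1
    rw [h1, take_split]
    exact List.take_prefix _ _



def atA (L : ℕ) : Fin L → Fin 3 := fun _ => 0
def atH (L dh : ℕ) : Fin L → Fin 3 := fun j => if (j:ℕ) = dh then 1 else 0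
def atT1 (L tb : ℕ) : Fin L → Fin 3 := fun j => if (j:ℕ) ≤ tb then 2 else 0
def atT2 (L tb dt : ℕ) : Fin L → Fin 3 := fun j => if (j:ℕ) = dt then 1 else atT1 L tb j

noncomputable def pp (L dh tb dt : ℕ) : (Fin L → Fin 3) → ℝ := fun y =>
  (if y = atA L then 2/5 else 0) + (if y = atH L dh then 3/25 else 0)
  + (if y = atT1 L tb then 13/50 else 0) + (if y = atT2 L tb dt then 11/50 else 0)

lemma pp_nonneg (L dh tb dt : ℕ) (y : Fin L → Fin 3) : 0 ≤ pp L dh tb dt y := by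
  unfold pp; positivity

lemma sum_ite_single {α : Type*} [Fintype α] [DecidableEq α] (Q : α → Prop) [DecidablePred Q] (x : α) (c : ℝ) :
    (∑ y, if Q y then (if y = x then c else 0) else 0) = if Q x then c else 0 := by
  have h : ∀ y : α, (if Q y then (if y = x then c else 0) else 0)
      = if y = x then (if Q x then c else 0) else 0 := by
    intro y
    by_cases hy : y = x
    · subst hy; simp
    · simp [hy]
  rw [Finset.sum_congr rfl (fun y _ => h y)]
  simp

lemma sum_pp_ite (L dh tb dt : ℕ) (Q : (Fin L → Fin 3) → Prop) [DecidablePred Q] :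
    (∑ y, if Q y then pp L dh tb dt y else 0)
      = (if Q (atA L) then (2/5:ℝ) else 0) + (if Q (atH L dh) then 3/25 else 0)
        + (if Q (atT1 L tb) then 13/50 else 0) + (if Q (atT2 L tb dt) then 11/50 else 0) := by
  have h : ∀ y, (if Q y then pp L dh tb dt y else 0)
      = (if Q y then (if y = atA L then (2/5:ℝ) else 0) else 0)
        + (if Q y then (if y = atH L dh then (3/25:ℝ) else 0) else 0)
        + (if Q y then (if y = atT1 L tb then (13/50:ℝ) else 0) else 0)
        + (if Q y then (if y = atT2 L tb dt then (11/50:ℝ) else 0) else 0) := by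
    intro y; by_cases hy : Q y <;> simp [hy, pp]
  rw [Finset.sum_congr rfl (fun y _ => h y)]
  rw [Finset.sum_add_distrib, Finset.sum_add_distrib, Finset.sum_add_distrib,
    sum_ite_single Q (atA L) (2/5), sum_ite_single Q (atH L dh) (3/25),
    sum_ite_single Q (atT1 L tb) (13/50), sum_ite_single Q (atT2 L tb dt) (11/50)]

lemma ite_mul_g {α : Type*} [DecidableEq α] (y x : α) (c : ℝ) (g : α → ℝ) :
    (if y = x then c else 0) * g y = if y = x then c * g x else 0 := by
  by_cases hy : y = x
  · subst hy; simp
  · simp [hy]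

lemma sum_pp_mul (L dh tb dt : ℕ) (g : (Fin L → Fin 3) → ℝ) :
    (∑ y, pp L dh tb dt y * g y)
      = 2/5 * g (atA L) + 3/25 * g (atH L dh) + 13/50 * g (atT1 L tb)
        + 11/50 * g (atT2 L tb dt) := by
  have h : ∀ y, pp L dh tb dt y * g y
      = (if y = atA L then (2/5:ℝ) * g (atA L) else 0)
        + (if y = atH L dh then (3/25:ℝ) * g (atH L dh) else 0)
        + (if y = atT1 L tb then (13/50:ℝ) * g (atT1 L tb) else 0)
        + (if y = atT2 L tb dt then (11/50:ℝ) * g (atT2 L tb dt) else 0) := by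
    intro y
    unfold pp
    rw [add_mul, add_mul, add_mul, ite_mul_g, ite_mul_g, ite_mul_g, ite_mul_g]
  rw [Finset.sum_congr rfl (fun y _ => h y)]
  rw [Finset.sum_add_distrib, Finset.sum_add_distrib, Finset.sum_add_distrib]
  simp [Finset.sum_ite_eq']

lemma sum_pp (L dh tb dt : ℕ) : (∑ y, pp L dh tb dt y) = 1 := by
  have h := sum_pp_mul L dh tb dt (fun _ => 1)
  simp only [mul_one] at h
  rw [h]; norm_num

open Classical in
lemma prefixProb_pp (L dh tb dt : ℕ) (w : List (Fin 3)) :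
    prefixProb (pp L dh tb dt) w
      = (if w <+: List.ofFn (atA L) then (2/5:ℝ) else 0)
        + (if w <+: List.ofFn (atH L dh) then 3/25 else 0)
        + (if w <+: List.ofFn (atT1 L tb) then 13/50 else 0)
        + (if w <+: List.ofFn (atT2 L tb dt) then 11/50 else 0) := by
  unfold prefixProb
  have h := sum_pp_ite L dh tb dt (fun y => w <+: List.ofFn y)
  convert h using 2 with y hy
  congr!

end S6
namespace S6

section Decoder

variable {L : ℕ} (K T : ℕ) (p : (Fin L → Fin 3) → ℝ) (X : Fin L → Fin 3)

lemma pfx_length (m : ℕ) (hm : m ≤ L) : ((List.ofFn X).take m).length = m := by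
  simp; omega

lemma cont_take {m c s : ℕ} (hs : s ≤ c) :
    (cont X m c).take s = cont X m s := by
  have hmin : (m+s) ⊓ (m+c) = m + s := by omega
  rw [cont, cont, List.take_drop, List.take_take, hmin]

variable
  (hden : ∀ m, m < L → 0 < prefixProb p ((List.ofFn X).take m))
  (hnum : ∀ m, m < L → ∀ t', t'.length = min K (L - m) → t' ≠ cont X m (min K (L-m)) →
    prefixProb p ((List.ofFn X).take m ++ t')
      < prefixProb p ((List.ofFn X).take m ++ cont X m (min K (L-m))))

include hden hnum

lemma max_at {m : ℕ} (hm : m < L) :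
    ∀ t', t'.length = min K (L - m) →
      condProb p ((List.ofFn X).take m) t'
        ≤ condProb p ((List.ofFn X).take m) (cont X m (min K (L-m))) := by
  intro t' ht'
  by_cases he : t' = cont X m (min K (L-m))
  · rw [he]
  · have h := hnum m hm t' ht' he
    unfold condProb
    exact (div_le_div_iff_of_pos_right (hden m hm)).mpr h.le

lemma forced {m : ℕ} (hm : m < L) (t : List (Fin 3))
    (hlen : t.length = min K (L - m))
    (hmax : ∀ t', t'.length = min K (L - m) →
      condProb p ((List.ofFn X).take m) t' ≤ condProb p ((List.ofFn X).take m) t) :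
    t = cont X m (min K (L-m)) := by
  by_contra he
  have h1 := hnum m hm t hlen he
  have h2 := hmax (cont X m (min K (L-m))) (cont_length X (by omega))
  unfold condProb at h2
  rw [div_le_div_iff_of_pos_right (hden m hm)] at h2
  linarith

lemma step_lemma (hTK : T ≤ K) {m : ℕ} (hm : m < L) :
    LookStep K T p ((List.ofFn X).take m) ((List.ofFn X).take (m + min T (L - m))) := by
  have hlen := pfx_length X m (le_of_lt hm)
  have hcl : m + min K (L - m) ≤ L := by omega
  refine ⟨by rw [hlen]; exact hm, cont X m (min K (L-m)), ?_, ?_, ?_⟩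
  · rw [hlen]; exact cont_length X hcl
  · rw [hlen]; exact max_at K p X hden hnum hm
  · rw [hlen, cont_take X (by omega : min T (L-m) ≤ min K (L-m)), take_split]

lemma reaches (hT : 1 ≤ T) (hTK : T ≤ K) :
    Relation.ReflTransGen (LookStep K T p) [] (List.ofFn X) := by
  have hofn : (List.ofFn X).take L = List.ofFn X :=
    List.take_of_length_le (by simp)
  suffices H : ∀ n m, m ≤ L → L - m ≤ n →
      Relation.ReflTransGen (LookStep K T p) ((List.ofFn X).take m) (List.ofFn X) by
    have := H L 0 (by omega) (by omega)
    simpa using this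
  intro n
  induction n with
  | zero =>
    intro m hm h0
    have : m = L := by omega
    subst this
    rw [hofn]
  | succ n ih =>
    intro m hm hfuel
    by_cases hm' : m = L
    · subst hm'; rw [hofn]
    · have hmL : m < L := by omega
      exact Relation.ReflTransGen.head (step_lemma K T p X hden hnum hTK hmL)
        (ih (m + min T (L - m)) (by omega) (by omega))

lemma reach_char (hTK : T ≤ K) (w : List (Fin 3)) (hw : Reachable K T p w) :
    ∃ m, m ≤ L ∧ w = (List.ofFn X).take m := by
  induction hw with
  | refl => exact ⟨0, by omega, by simp⟩
  | tail hab hstep ih =>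
    obtain ⟨m, hm, rfl⟩ := ih
    obtain ⟨hlt, t, hlen, hmax, rfl⟩ := hstep
    rw [pfx_length X m hm] at hlt hlen hmax ⊢
    have ht := forced K p X hden hnum hlt t hlen hmax
    subst ht
    refine ⟨m + min T (L - m), by omega, ?_⟩
    rw [cont_take X (by omega : min T (L-m) ≤ min K (L-m)), take_split]

lemma tiefree (hTK : T ≤ K) : TieFree K T p := by
  intro w hw hlenL
  obtain ⟨m, hm, rfl⟩ := reach_char K T p X hden hnum hTK w hw
  rw [pfx_length X m hm] at hlenL ⊢
  refine ⟨cont X m (min K (L-m)), ⟨cont_length X (by omega), max_at K p X hden hnum hlenL⟩, ?_⟩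
  rintro t' ⟨hl', hmax'⟩
  exact forced K p X hden hnum hlenL t' hl' hmax'

lemma islook (hT : 1 ≤ T) (hTK : T ≤ K) : IsLookahead K T p X :=
  reaches K T p X hden hnum hT hTK

end Decoder
end S6
namespace S6
section Inst

variable {L : ℕ} (K₁ K₂ tb : ℕ)

-- basic prefix facts
lemma prefA_A (m : ℕ) (hm : m ≤ L) :
    (List.ofFn (atA L)).take m <+: List.ofFn (atA L) :=
  (take_prefix_iff hm).mpr (fun _ _ _ => rfl)

lemma prefA_H {dh m : ℕ} (hm : m ≤ L) (h : m ≤ dh) :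
    (List.ofFn (atA L)).take m <+: List.ofFn (atH L dh) := by
  refine (take_prefix_iff hm).mpr (fun i hi him => ?_)
  have hne : i ≠ dh := by omega
  simp [atA, atH, hne]

lemma prefA_H_not {dh m : ℕ} (hm : m ≤ L) (hdh : dh < L) (h : dh < m) :
    ¬ ((List.ofFn (atA L)).take m <+: List.ofFn (atH L dh)) := by
  intro hp
  have := (take_prefix_iff hm).mp hp dh hdh h
  simp [atA, atH] at this

lemma prefA_T1_not {m : ℕ} (hm : m ≤ L) (hL : 0 < L) (h1 : 1 ≤ m) :
    ¬ ((List.ofFn (atA L)).take m <+: List.ofFn (atT1 L tb)) := by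
  intro hp
  have := (take_prefix_iff hm).mp hp 0 hL h1
  simp [atA, atT1] at this

lemma prefA_T2_not {dt m : ℕ} (hm : m ≤ L) (hL : 0 < L) (h1 : 1 ≤ m) (hdt : 1 ≤ dt) :
    ¬ ((List.ofFn (atA L)).take m <+: List.ofFn (atT2 L tb dt)) := by
  intro hp
  have := (take_prefix_iff hm).mp hp 0 hL h1
  have hne : (0:ℕ) ≠ dt := by omega
  simp [atA, atT2, atT1, hne] at this

lemma contH_eq_contA {dh m c : ℕ} (hc : m + c ≤ L) (h : dh < m ∨ m + c ≤ dh) :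
    cont (atH L dh) m c = cont (atA L) m c := by
  refine (cont_eq_iff hc).mpr (fun i hi h1 h2 => ?_)
  have hne : i ≠ dh := by omega
  simp [atA, atH, hne]

lemma ite_le {P : Prop} [Decidable P] {c : ℝ} (hc : 0 ≤ c) : (if P then c else 0) ≤ c := by
  split <;> simp [hc]

lemma ite_nonneg {P : Prop} [Decidable P] {c : ℝ} (hc : 0 ≤ c) : 0 ≤ (if P then c else 0) := by
  positivity

lemma hden_A (dh dt : ℕ) : ∀ m, m < L →
    0 < prefixProb (pp L dh tb dt) ((List.ofFn (atA L)).take m) := by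
  intro m hm
  rw [prefixProb_pp]
  rw [if_pos (prefA_A m (le_of_lt hm))]
  have h2 : (0:ℝ) ≤ if (List.ofFn (atA L)).take m <+: List.ofFn (atH L dh) then 3/25 else 0 :=
    ite_nonneg (by norm_num)
  have h3 : (0:ℝ) ≤ if (List.ofFn (atA L)).take m <+: List.ofFn (atT1 L tb) then 13/50 else 0 :=
    ite_nonneg (by norm_num)
  have h4 : (0:ℝ) ≤ if (List.ofFn (atA L)).take m <+: List.ofFn (atT2 L tb dt) then 11/50 else 0 :=
    ite_nonneg (by norm_num)
  linarith

lemma hnum_A (hK₁ : 1 ≤ K₁) (hKK : K₁ < K₂) (hK₂L : K₂ < L) :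
    ∀ m, m < L → ∀ t', t'.length = min K₁ (L - m) → t' ≠ cont (atA L) m (min K₁ (L-m)) →
    prefixProb (pp L (K₂-1) tb K₂) ((List.ofFn (atA L)).take m ++ t')
      < prefixProb (pp L (K₂-1) tb K₂) ((List.ofFn (atA L)).take m ++ cont (atA L) m (min K₁ (L-m))) := by
  intro m hm t' hlen hne
  set c := min K₁ (L - m) with hc_def
  have hm' : m ≤ L := le_of_lt hm
  have hc : m + c ≤ L := by omega
  have hcontlen : (cont (atA L) m c).length = c := cont_length _ hc
  have hL : 0 < L := by omega
  rw [prefixProb_pp, prefixProb_pp]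
  -- rewrite all 8 conditions
  simp only [append_prefix_iff hm' hc hlen, append_prefix_iff hm' hc hcontlen]
  -- cont (atA) m c = cont of atA : trivial
  have hA2 : ((List.ofFn (atA L)).take m <+: List.ofFn (atA L)) ∧ True :=
    ⟨prefA_A m hm', trivial⟩
  rw [if_pos hA2]
  -- LHS A-term is false
  have hA1 : ¬ (((List.ofFn (atA L)).take m <+: List.ofFn (atA L)) ∧ t' = cont (atA L) m c) := by
    rintro ⟨-, h⟩; exact hne h
  rw [if_neg hA1]
  by_cases hm0 : m = 0
  · subst hm0
    have hcK : c = K₁ := by omega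
    -- RHS H-term true
    have hH2 : ((List.ofFn (atA L)).take 0 <+: List.ofFn (atH L (K₂-1)))
        ∧ cont (atH L (K₂-1)) 0 c = cont (atA L) 0 c :=
      ⟨prefA_H (by omega) (by omega), contH_eq_contA hc (by omega)⟩
    have hH2' : ((List.ofFn (atA L)).take 0 <+: List.ofFn (atH L (K₂-1)))
        ∧ cont (atA L) 0 c = cont (atH L (K₂-1)) 0 c := ⟨hH2.1, hH2.2.symm⟩
    rw [if_pos hH2']
    -- LHS H-term false : t' = cont atH = cont atA contradiction
    have hH1 : ¬ (((List.ofFn (atA L)).take 0 <+: List.ofFn (atH L (K₂-1)))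
        ∧ t' = cont (atH L (K₂-1)) 0 c) := by
      rintro ⟨-, h⟩
      rw [hH2.2] at h
      exact hne h
    rw [if_neg hH1]
    -- bound remaining terms
    have b1 : (if ((List.ofFn (atA L)).take 0 <+: List.ofFn (atT1 L tb)) ∧ t' = cont (atT1 L tb) 0 c
        then (13/50:ℝ) else 0) ≤ 13/50 := ite_le (by norm_num)
    have b2 : (if ((List.ofFn (atA L)).take 0 <+: List.ofFn (atT2 L tb K₂)) ∧ t' = cont (atT2 L tb K₂) 0 c
        then (11/50:ℝ) else 0) ≤ 11/50 := ite_le (by norm_num)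
    have b3 : (0:ℝ) ≤ if ((List.ofFn (atA L)).take 0 <+: List.ofFn (atT1 L tb))
        ∧ cont (atA L) 0 c = cont (atT1 L tb) 0 c then 13/50 else 0 := ite_nonneg (by norm_num)
    have b4 : (0:ℝ) ≤ if ((List.ofFn (atA L)).take 0 <+: List.ofFn (atT2 L tb K₂))
        ∧ cont (atA L) 0 c = cont (atT2 L tb K₂) 0 c then 11/50 else 0 := ite_nonneg (by norm_num)
    linarith
  · -- m ≥ 1 : T-terms on LHS are 0, H-term ≤ 3/25 ; RHS ≥ 2/5
    have h1m : 1 ≤ m := by omega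
    have hT1 : ¬ (((List.ofFn (atA L)).take m <+: List.ofFn (atT1 L tb)) ∧ t' = cont (atT1 L tb) m c) := by
      rintro ⟨h, -⟩; exact prefA_T1_not tb hm' hL h1m h
    have hT2 : ¬ (((List.ofFn (atA L)).take m <+: List.ofFn (atT2 L tb K₂)) ∧ t' = cont (atT2 L tb K₂) m c) := by
      rintro ⟨h, -⟩; exact prefA_T2_not tb hm' hL h1m (by omega) h
    have hT1' : ¬ (((List.ofFn (atA L)).take m <+: List.ofFn (atT1 L tb))
        ∧ cont (atA L) m c = cont (atT1 L tb) m c) := by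
      rintro ⟨h, -⟩; exact prefA_T1_not tb hm' hL h1m h
    have hT2' : ¬ (((List.ofFn (atA L)).take m <+: List.ofFn (atT2 L tb K₂))
        ∧ cont (atA L) m c = cont (atT2 L tb K₂) m c) := by
      rintro ⟨h, -⟩; exact prefA_T2_not tb hm' hL h1m (by omega) h
    rw [if_neg hT1, if_neg hT2, if_neg hT1', if_neg hT2']
    have b1 : (if ((List.ofFn (atA L)).take m <+: List.ofFn (atH L (K₂-1))) ∧ t' = cont (atH L (K₂-1)) m c
        then (3/25:ℝ) else 0) ≤ 3/25 := ite_le (by norm_num)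
    have b2 : (0:ℝ) ≤ if ((List.ofFn (atA L)).take m <+: List.ofFn (atH L (K₂-1)))
        ∧ cont (atA L) m c = cont (atH L (K₂-1)) m c then 3/25 else 0 := ite_nonneg (by norm_num)
    linarith

end Inst
end S6
namespace S6
section Inst2

variable {L : ℕ} (K₁ K₂ tb : ℕ)

lemma prefT1_T1 (m : ℕ) (hm : m ≤ L) :
    (List.ofFn (atT1 L tb)).take m <+: List.ofFn (atT1 L tb) :=
  (take_prefix_iff hm).mpr (fun _ _ _ => rfl)

lemma prefT1_T2 {dt m : ℕ} (hm : m ≤ L) (h : m ≤ dt) :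
    (List.ofFn (atT1 L tb)).take m <+: List.ofFn (atT2 L tb dt) := by
  refine (take_prefix_iff hm).mpr (fun i hi him => ?_)
  have hne : i ≠ dt := by omega
  simp [atT1, atT2, hne]

lemma prefT1_A_not {m : ℕ} (hm : m ≤ L) (hL : 0 < L) (h1 : 1 ≤ m) :
    ¬ ((List.ofFn (atT1 L tb)).take m <+: List.ofFn (atA L)) := by
  intro hp
  have := (take_prefix_iff hm).mp hp 0 hL h1
  simp [atA, atT1] at this

lemma prefT1_H_not {dh m : ℕ} (hm : m ≤ L) (hL : 0 < L) (h1 : 1 ≤ m) (hdh : 1 ≤ dh) :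
    ¬ ((List.ofFn (atT1 L tb)).take m <+: List.ofFn (atH L dh)) := by
  intro hp
  have := (take_prefix_iff hm).mp hp 0 hL h1
  have hne : (0:ℕ) ≠ dh := by omega
  simp [atH, atT1, hne] at this

lemma contT1_eq_contT2 {dt m c : ℕ} (hc : m + c ≤ L) (h : dt < m ∨ m + c ≤ dt) :
    cont (atT1 L tb) m c = cont (atT2 L tb dt) m c := by
  refine (cont_eq_iff hc).mpr (fun i hi h1 h2 => ?_)
  have hne : i ≠ dt := by omega
  simp [atT1, atT2, hne]

lemma contT1_ne_contT2 {dt m c : ℕ} (hc : m + c ≤ L) (htb : tb < dt) (h1 : m ≤ dt) (h2 : dt < m + c) :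
    cont (atT1 L tb) m c ≠ cont (atT2 L tb dt) m c := by
  intro he
  have := (cont_eq_iff hc).mp he dt (by omega) h1 h2
  have hne : ¬ (dt ≤ tb) := by omega
  simp [atT1, atT2, hne] at this

lemma contA_ne_contH {dh m c : ℕ} (hc : m + c ≤ L) (h1 : m ≤ dh) (h2 : dh < m + c) :
    cont (atA L) m c ≠ cont (atH L dh) m c := by
  intro he
  have := (cont_eq_iff hc).mp he dh (by omega) h1 h2
  simp [atA, atH] at this

lemma hden_T1 (dh dt : ℕ) : ∀ m, m < L →
    0 < prefixProb (pp L dh tb dt) ((List.ofFn (atT1 L tb)).take m) := by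
  intro m hm
  rw [prefixProb_pp]
  rw [if_pos (prefT1_T1 tb m (le_of_lt hm))]
  have h2 : (0:ℝ) ≤ if (List.ofFn (atT1 L tb)).take m <+: List.ofFn (atA L) then 2/5 else 0 :=
    ite_nonneg (by norm_num)
  have h3 : (0:ℝ) ≤ if (List.ofFn (atT1 L tb)).take m <+: List.ofFn (atH L dh) then 3/25 else 0 :=
    ite_nonneg (by norm_num)
  have h4 : (0:ℝ) ≤ if (List.ofFn (atT1 L tb)).take m <+: List.ofFn (atT2 L tb dt) then 11/50 else 0 :=
    ite_nonneg (by norm_num)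
  linarith

lemma hnum_T1 (hK₁ : 1 ≤ K₁) (hKK : K₁ < K₂) (hK₂L : K₂ < L) (htb : tb < K₂) :
    ∀ m, m < L → ∀ t', t'.length = min K₂ (L - m) → t' ≠ cont (atT1 L tb) m (min K₂ (L-m)) →
    prefixProb (pp L (K₂-1) tb K₂) ((List.ofFn (atT1 L tb)).take m ++ t')
      < prefixProb (pp L (K₂-1) tb K₂)
          ((List.ofFn (atT1 L tb)).take m ++ cont (atT1 L tb) m (min K₂ (L-m))) := by
  intro m hm t' hlen hne
  set c := min K₂ (L - m) with hc_def
  have hm' : m ≤ L := le_of_lt hm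
  have hc : m + c ≤ L := by omega
  have hcontlen : (cont (atT1 L tb) m c).length = c := cont_length _ hc
  have hL : 0 < L := by omega
  rw [prefixProb_pp, prefixProb_pp]
  simp only [append_prefix_iff hm' hc hlen, append_prefix_iff hm' hc hcontlen]
  have hT12 : ((List.ofFn (atT1 L tb)).take m <+: List.ofFn (atT1 L tb)) ∧ True :=
    ⟨prefT1_T1 tb m hm', trivial⟩
  rw [if_pos hT12]
  have hT11 : ¬ (((List.ofFn (atT1 L tb)).take m <+: List.ofFn (atT1 L tb)) ∧ t' = cont (atT1 L tb) m c) := by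
    rintro ⟨-, h⟩; exact hne h
  rw [if_neg hT11]
  by_cases hm0 : m = 0
  · subst hm0
    have hcK : c = K₂ := by omega
    have hctt : cont (atT1 L tb) 0 c = cont (atT2 L tb K₂) 0 c :=
      contT1_eq_contT2 tb hc (by omega)
    have hT22 : ((List.ofFn (atT1 L tb)).take 0 <+: List.ofFn (atT2 L tb K₂))
        ∧ cont (atT1 L tb) 0 c = cont (atT2 L tb K₂) 0 c :=
      ⟨prefT1_T2 tb (by omega) (by omega), hctt⟩
    rw [if_pos hT22]
    have hT21 : ¬ (((List.ofFn (atT1 L tb)).take 0 <+: List.ofFn (atT2 L tb K₂))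
        ∧ t' = cont (atT2 L tb K₂) 0 c) := by
      rintro ⟨-, h⟩
      rw [← hctt] at h
      exact hne h
    rw [if_neg hT21]
    have bA2 : (0:ℝ) ≤ if ((List.ofFn (atT1 L tb)).take 0 <+: List.ofFn (atA L))
        ∧ cont (atT1 L tb) 0 c = cont (atA L) 0 c then 2/5 else 0 := ite_nonneg (by norm_num)
    have bH2 : (0:ℝ) ≤ if ((List.ofFn (atT1 L tb)).take 0 <+: List.ofFn (atH L (K₂-1)))
        ∧ cont (atT1 L tb) 0 c = cont (atH L (K₂-1)) 0 c then 3/25 else 0 := ite_nonneg (by norm_num)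
    by_cases ht'A : t' = cont (atA L) 0 c
    · -- H-term on LHS must be 0
      have hH1 : ¬ (((List.ofFn (atT1 L tb)).take 0 <+: List.ofFn (atH L (K₂-1)))
          ∧ t' = cont (atH L (K₂-1)) 0 c) := by
        rintro ⟨-, h⟩
        rw [ht'A] at h
        exact contA_ne_contH hc (by omega) (by omega) h
      rw [if_neg hH1]
      have bA1 : (if ((List.ofFn (atT1 L tb)).take 0 <+: List.ofFn (atA L)) ∧ t' = cont (atA L) 0 c
          then (2/5:ℝ) else 0) ≤ 2/5 := ite_le (by norm_num)
      linarith
    · have hA1 : ¬ (((List.ofFn (atT1 L tb)).take 0 <+: List.ofFn (atA L)) ∧ t' = cont (atA L) 0 c) := by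
        rintro ⟨-, h⟩; exact ht'A h
      rw [if_neg hA1]
      have bH1 : (if ((List.ofFn (atT1 L tb)).take 0 <+: List.ofFn (atH L (K₂-1)))
          ∧ t' = cont (atH L (K₂-1)) 0 c then (3/25:ℝ) else 0) ≤ 3/25 := ite_le (by norm_num)
      linarith
  · have h1m : 1 ≤ m := by omega
    have hA1 : ¬ (((List.ofFn (atT1 L tb)).take m <+: List.ofFn (atA L)) ∧ t' = cont (atA L) m c) := by
      rintro ⟨h, -⟩; exact prefT1_A_not tb hm' hL h1m h
    have hH1 : ¬ (((List.ofFn (atT1 L tb)).take m <+: List.ofFn (atH L (K₂-1)))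
        ∧ t' = cont (atH L (K₂-1)) m c) := by
      rintro ⟨h, -⟩; exact prefT1_H_not tb hm' hL h1m (by omega) h
    have hA2 : ¬ (((List.ofFn (atT1 L tb)).take m <+: List.ofFn (atA L))
        ∧ cont (atT1 L tb) m c = cont (atA L) m c) := by
      rintro ⟨h, -⟩; exact prefT1_A_not tb hm' hL h1m h
    have hH2 : ¬ (((List.ofFn (atT1 L tb)).take m <+: List.ofFn (atH L (K₂-1)))
        ∧ cont (atT1 L tb) m c = cont (atH L (K₂-1)) m c) := by
      rintro ⟨h, -⟩; exact prefT1_H_not tb hm' hL h1m (by omega) h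
    rw [if_neg hA1, if_neg hH1, if_neg hA2, if_neg hH2]
    have bT21 : (if ((List.ofFn (atT1 L tb)).take m <+: List.ofFn (atT2 L tb K₂))
        ∧ t' = cont (atT2 L tb K₂) m c then (11/50:ℝ) else 0) ≤ 11/50 := ite_le (by norm_num)
    have bT22 : (0:ℝ) ≤ if ((List.ofFn (atT1 L tb)).take m <+: List.ofFn (atT2 L tb K₂))
        ∧ cont (atT1 L tb) m c = cont (atT2 L tb K₂) m c then 11/50 else 0 := ite_nonneg (by norm_num)
    linarith

end Inst2
end S6
namespace S6
section Loss

def Agr (L N i : ℕ) (a b : Fin L → Fin 3) : Prop :=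
  ∀ k : ℕ, k < N → ∀ h : i + k < L, a ⟨i + k, h⟩ = b ⟨i + k, h⟩

open Classical in
noncomputable def q (L N dh tb dt i : ℕ) (a : Fin L → Fin 3) : ℝ :=
  (if Agr L N i a (atA L) then 2/5 else 0) + (if Agr L N i a (atH L dh) then 3/25 else 0)
  + (if Agr L N i a (atT1 L tb) then 13/50 else 0) + (if Agr L N i a (atT2 L tb dt) then 11/50 else 0)

variable {L N : ℕ}

lemma agr_intro {i : ℕ} {a b : Fin L → Fin 3}
    (h : ∀ j (hj : j < L), i ≤ j → j < i + N → a ⟨j,hj⟩ = b ⟨j,hj⟩) : Agr L N i a b := by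
  intro k hk hh
  exact h (i+k) hh (by omega) (by omega)

lemma agr_elim {i : ℕ} {a b : Fin L → Fin 3} (hA : Agr L N i a b)
    {j : ℕ} (hj : j < L) (h1 : i ≤ j) (h2 : j < i + N) : a ⟨j,hj⟩ = b ⟨j,hj⟩ := by
  have hik : i + (j - i) < L := by omega
  have key := hA (j - i) (by omega) hik
  have he : (⟨i + (j-i), hik⟩ : Fin L) = ⟨j, hj⟩ := by
    apply Fin.ext; simp; omega
  rwa [he] at key

lemma agr_refl {i : ℕ} (a : Fin L → Fin 3) : Agr L N i a a := fun _ _ _ => rfl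

lemma ite_iff {P Q : Prop} {instP : Decidable P} {instQ : Decidable Q} (h : P ↔ Q) (c : ℝ) :
    (if P then c else 0) = (if Q then c else 0) := by
  by_cases hp : P
  · rw [if_pos hp, if_pos (h.mp hp)]
  · rw [if_neg hp, if_neg (fun hq => hp (h.mpr hq))]

lemma agr_congr {i : ℕ} {a b : Fin L → Fin 3} (hab : Agr L N i a b) (x : Fin L → Fin 3) :
    Agr L N i a x ↔ Agr L N i b x := by
  constructor
  · intro h k hk hh; rw [← hab k hk hh]; exact h k hk hh
  · intro h k hk hh; rw [hab k hk hh]; exact h k hk hh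

lemma q_congr {dh tb dt i : ℕ} {a b : Fin L → Fin 3} (hab : Agr L N i a b) :
    q L N dh tb dt i a = q L N dh tb dt i b := by
  unfold q
  rw [ite_iff (agr_congr hab (atA L)) (2/5), ite_iff (agr_congr hab (atH L dh)) (3/25),
     ite_iff (agr_congr hab (atT1 L tb)) (13/50), ite_iff (agr_congr hab (atT2 L tb dt)) (11/50)]

-- expected loss in terms of q
open Classical in
lemma exp_loss_eq (dh tb dt : ℕ) (a : Fin L → Fin 3) :
    (∑ y, pp L dh tb dt y * ngramLoss N a y)
      = ∑ i ∈ Finset.range (L - N + 1), (1 - q L N dh tb dt i a) := by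
  rw [sum_pp_mul]
  unfold ngramLoss q Agr
  rw [Finset.mul_sum, Finset.mul_sum, Finset.mul_sum, Finset.mul_sum,
     ← Finset.sum_add_distrib, ← Finset.sum_add_distrib, ← Finset.sum_add_distrib]
  apply Finset.sum_congr rfl
  intro i _
  have e : ∀ (P : Prop) [Decidable P] (c : ℝ), c * (if P then (0:ℝ) else 1) = c - (if P then c else 0) := by
    intro P _ c
    split <;> ring
  simp only [e]
  split_ifs <;> ring

end Loss
end S6
namespace S6
section Win

variable {L N : ℕ}

lemma agr_symm {i : ℕ} {a b : Fin L → Fin 3} (h : Agr L N i a b) : Agr L N i b a :=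
  fun k hk hh => (h k hk hh).symm

lemma not_agr_of_pt {i : ℕ} {a b : Fin L → Fin 3} {j : ℕ} (hj : j < L)
    (h1 : i ≤ j) (h2 : j < i + N) (hne : a ⟨j,hj⟩ ≠ b ⟨j,hj⟩) : ¬ Agr L N i a b :=
  fun hA => hne (agr_elim hA hj h1 h2)

lemma agr_trans {i : ℕ} {a b c : Fin L → Fin 3} (h1 : Agr L N i a b) (h2 : Agr L N i b c) :
    Agr L N i a c := fun k hk hh => (h1 k hk hh).trans (h2 k hk hh)

-- atom agreements
lemma agr_A_H {dh i : ℕ} (h : dh < i ∨ i + N ≤ dh) : Agr L N i (atA L) (atH L dh) := by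
  refine agr_intro (fun j hj h1 h2 => ?_)
  have : j ≠ dh := by omega
  simp [atA, atH, this]

lemma agr_A_T1 {tb i : ℕ} (h : tb < i) : Agr L N i (atA L) (atT1 L tb) := by
  refine agr_intro (fun j hj h1 h2 => ?_)
  have : ¬ (j ≤ tb) := by omega
  simp [atA, atT1, this]

lemma agr_T1_T2 {tb dt i : ℕ} (h : dt < i ∨ i + N ≤ dt) : Agr L N i (atT1 L tb) (atT2 L tb dt) := by
  refine agr_intro (fun j hj h1 h2 => ?_)
  have : j ≠ dt := by omega
  simp [atT1, atT2, this]

lemma not_agr_A_H {dh i : ℕ} (hdh : dh < L) (h1 : i ≤ dh) (h2 : dh < i + N) :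
    ¬ Agr L N i (atA L) (atH L dh) := by
  refine not_agr_of_pt hdh h1 h2 ?_
  simp [atA, atH]

lemma not_agr_T1_T2 {tb dt i : ℕ} (hdt : dt < L) (htb : tb < dt) (h1 : i ≤ dt) (h2 : dt < i + N) :
    ¬ Agr L N i (atT1 L tb) (atT2 L tb dt) := by
  refine not_agr_of_pt hdt h1 h2 ?_
  have : ¬ (dt ≤ tb) := by omega
  simp [atT1, atT2, this]

-- window value extraction
lemma agr_val {i : ℕ} {a b : Fin L → Fin 3} (hA : Agr L N i a b) {j : ℕ}
    (hj : j < L) (h1 : i ≤ j) (h2 : j < i + N) : a ⟨j,hj⟩ = b ⟨j,hj⟩ :=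
  agr_elim hA hj h1 h2

end Win
end S6
namespace S6
section QBound

variable {L N : ℕ}

-- values
lemma vT1_0 {tb : ℕ} (h0L : 0 < L) : atT1 L tb ⟨0, h0L⟩ = 2 := by simp [atT1]
lemma vT1_1 (h1L : 1 < L) : atT1 L 1 ⟨1, h1L⟩ = 2 := by simp [atT1]
lemma vA_any {j : ℕ} (hj : j < L) : atA L ⟨j, hj⟩ = 0 := rfl
lemma vH_ne2 {dh j : ℕ} (hj : j < L) : atH L dh ⟨j,hj⟩ ≠ 2 := by
  unfold atH; split <;> decide
lemma vH_0 {dh : ℕ} (h0L : 0 < L) (h : dh ≠ 0) : atH L dh ⟨0,h0L⟩ = 0 := by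
  have : ¬((0:ℕ) = dh) := by omega
  simp [atH, this]
lemma vT2_0 {tb dt : ℕ} (h0L : 0 < L) (h : dt ≠ 0) : atT2 L tb dt ⟨0,h0L⟩ = 2 := by
  have : ¬((0:ℕ) = dt) := by omega
  simp [atT2, atT1, this]
lemma vT2_1 {dt : ℕ} (h1L : 1 < L) (h : dt ≠ 1) : atT2 L 1 dt ⟨1,h1L⟩ = 2 := by
  have : ¬((1:ℕ) = dt) := by omega
  simp [atT2, atT1, this]

open Classical in
lemma q_A_lb {dh tb dt i : ℕ} : 2/5 ≤ q L N dh tb dt i (atA L) := by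
  unfold q
  rw [if_pos (agr_refl _)]
  have b1 : (0:ℝ) ≤ if Agr L N i (atA L) (atH L dh) then 3/25 else 0 := ite_nonneg (by norm_num)
  have b2 : (0:ℝ) ≤ if Agr L N i (atA L) (atT1 L tb) then 13/50 else 0 := ite_nonneg (by norm_num)
  have b3 : (0:ℝ) ≤ if Agr L N i (atA L) (atT2 L tb dt) then 11/50 else 0 := ite_nonneg (by norm_num)
  linarith

open Classical in
lemma q_le_A_offtrap {dh tb dt i : ℕ} (htb : tb < i) (y' : Fin L → Fin 3) :
    q L N dh tb dt i y' ≤ q L N dh tb dt i (atA L) := by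
  by_cases hA : Agr L N i y' (atA L)
  · exact le_of_eq (q_congr hA)
  · have hT1 : ¬ Agr L N i y' (atT1 L tb) := fun h =>
      hA (agr_trans h (agr_symm (agr_A_T1 htb)))
    have hq : q L N dh tb dt i y' ≤ 17/50 := by
      unfold q
      rw [if_neg hA, if_neg hT1]
      have b1 : (if Agr L N i y' (atH L dh) then (3/25:ℝ) else 0) ≤ 3/25 := ite_le (by norm_num)
      have b2 : (if Agr L N i y' (atT2 L tb dt) then (11/50:ℝ) else 0) ≤ 11/50 := ite_le (by norm_num)
      linarith
    have := q_A_lb (L := L) (N := N) (dh := dh) (tb := tb) (dt := dt) (i := i)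
    linarith

open Classical in
lemma q0_caseA (hN : 1 ≤ N) (hNL : N ≤ L) (hK2 : 2 ≤ K₂) (hK₂L : K₂ < L) (hNK : N ≠ K₂)
    (y' : Fin L → Fin 3) :
    q L N (K₂-1) 0 K₂ 0 y' ≤ q L N (K₂-1) 0 K₂ 0 (atA L) := by
  have h0L : 0 < L := by omega
  by_cases hA : Agr L N 0 y' (atA L)
  · exact le_of_eq (q_congr hA)
  have hAlb := q_A_lb (L := L) (N := N) (dh := K₂-1) (tb := 0) (dt := K₂) (i := 0)
  by_cases hT1 : Agr L N 0 y' (atT1 L 0)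
  · have hy0 : y' ⟨0, h0L⟩ = 2 := by
      have := agr_val hT1 h0L (le_refl 0) (by omega)
      rwa [vT1_0 h0L] at this
    have hH : ¬ Agr L N 0 y' (atH L (K₂-1)) := by
      intro h
      have := agr_val h h0L (le_refl 0) (by omega)
      rw [hy0, vH_0 h0L (by omega)] at this
      exact absurd this (by decide)
    rcases lt_or_gt_of_ne hNK with hlt | hgt
    · -- N < K₂ : pad with H on RHS
      have hq : q L N (K₂-1) 0 K₂ 0 y' ≤ 24/50 := by
        unfold q
        rw [if_neg hA, if_neg hH]
        have b1 : (if Agr L N 0 y' (atT1 L 0) then (13/50:ℝ) else 0) ≤ 13/50 := ite_le (by norm_num)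
        have b2 : (if Agr L N 0 y' (atT2 L 0 K₂) then (11/50:ℝ) else 0) ≤ 11/50 := ite_le (by norm_num)
        linarith
      have hrhs : 2/5 + 3/25 ≤ q L N (K₂-1) 0 K₂ 0 (atA L) := by
        unfold q
        rw [if_pos (agr_refl _), if_pos (agr_A_H (Or.inr (by omega)))]
        have b1 : (0:ℝ) ≤ if Agr L N 0 (atA L) (atT1 L 0) then 13/50 else 0 := ite_nonneg (by norm_num)
        have b2 : (0:ℝ) ≤ if Agr L N 0 (atA L) (atT2 L 0 K₂) then 11/50 else 0 := ite_nonneg (by norm_num)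
        linarith
      linarith
    · -- N > K₂ : T2 dies
      have hT2 : ¬ Agr L N 0 y' (atT2 L 0 K₂) := by
        intro h
        exact not_agr_T1_T2 (by omega) (by omega) (by omega) (by omega)
          (agr_trans (agr_symm hT1) h)
      have hq : q L N (K₂-1) 0 K₂ 0 y' ≤ 13/50 := by
        unfold q
        rw [if_neg hA, if_neg hH, if_neg hT2]
        have b1 : (if Agr L N 0 y' (atT1 L 0) then (13/50:ℝ) else 0) ≤ 13/50 := ite_le (by norm_num)
        linarith
      linarith
  · have hq : q L N (K₂-1) 0 K₂ 0 y' ≤ 17/50 := by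
      unfold q
      rw [if_neg hA, if_neg hT1]
      have b1 : (if Agr L N 0 y' (atH L (K₂-1)) then (3/25:ℝ) else 0) ≤ 3/25 := ite_le (by norm_num)
      have b2 : (if Agr L N 0 y' (atT2 L 0 K₂) then (11/50:ℝ) else 0) ≤ 11/50 := ite_le (by norm_num)
      linarith
    linarith

open Classical in
lemma q0_strict_A (hN : 1 ≤ N) (hNL : N ≤ L) (hK2 : 2 ≤ K₂) (hK₂L : K₂ < L) (hNK : N ≠ K₂) :
    q L N (K₂-1) 0 K₂ 0 (atT1 L 0) < q L N (K₂-1) 0 K₂ 0 (atA L) := by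
  have h0L : 0 < L := by omega
  have hA : ¬ Agr L N 0 (atT1 L 0) (atA L) := by
    refine not_agr_of_pt h0L (le_refl 0) (by omega) ?_
    rw [vT1_0 h0L, vA_any h0L]
    decide
  have hH : ¬ Agr L N 0 (atT1 L 0) (atH L (K₂-1)) := by
    refine not_agr_of_pt h0L (le_refl 0) (by omega) ?_
    rw [vT1_0 h0L, vH_0 h0L (by omega)]
    decide
  rcases lt_or_gt_of_ne hNK with hlt | hgt
  · have hq : q L N (K₂-1) 0 K₂ 0 (atT1 L 0) ≤ 24/50 := by
      unfold q
      rw [if_neg hA, if_neg hH]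
      have b1 : (if Agr L N 0 (atT1 L 0) (atT1 L 0) then (13/50:ℝ) else 0) ≤ 13/50 := ite_le (by norm_num)
      have b2 : (if Agr L N 0 (atT1 L 0) (atT2 L 0 K₂) then (11/50:ℝ) else 0) ≤ 11/50 := ite_le (by norm_num)
      linarith
    have hrhs : 2/5 + 3/25 ≤ q L N (K₂-1) 0 K₂ 0 (atA L) := by
      unfold q
      rw [if_pos (agr_refl _), if_pos (agr_A_H (Or.inr (by omega)))]
      have b1 : (0:ℝ) ≤ if Agr L N 0 (atA L) (atT1 L 0) then 13/50 else 0 := ite_nonneg (by norm_num)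
      have b2 : (0:ℝ) ≤ if Agr L N 0 (atA L) (atT2 L 0 K₂) then 11/50 else 0 := ite_nonneg (by norm_num)
      linarith
    linarith
  · have hT2 : ¬ Agr L N 0 (atT1 L 0) (atT2 L 0 K₂) :=
      not_agr_T1_T2 (by omega) (by omega) (by omega) (by omega)
    have hq : q L N (K₂-1) 0 K₂ 0 (atT1 L 0) ≤ 13/50 := by
      unfold q
      rw [if_neg hA, if_neg hH, if_neg hT2]
      have b1 : (if Agr L N 0 (atT1 L 0) (atT1 L 0) then (13/50:ℝ) else 0) ≤ 13/50 := ite_le (by norm_num)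
      linarith
    have := q_A_lb (L := L) (N := N) (dh := K₂-1) (tb := 0) (dt := K₂) (i := 0)
    linarith

end QBound
end S6
namespace S6
section QB

variable {L N : ℕ}

open Classical in
lemma qB_two (hK2 : 2 ≤ K₂) (hK₂L : K₂ < L) (hNK : N = K₂) (h1L : 1 < L)
    (y' : Fin L → Fin 3) (hy2 : y' ⟨1, h1L⟩ = 2) :
    q L N (K₂-1) 1 K₂ 0 y' ≤ 24/50 ∧ q L N (K₂-1) 1 K₂ 1 y' ≤ 13/50 := by
  have hN2 : 2 ≤ N := by omega
  constructor
  · have hA : ¬ Agr L N 0 y' (atA L) := by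
      refine not_agr_of_pt h1L (by omega) (by omega) ?_
      rw [hy2, vA_any h1L]; decide
    have hH : ¬ Agr L N 0 y' (atH L (K₂-1)) := by
      intro h
      have := agr_val h h1L (by omega) (by omega)
      rw [hy2] at this
      exact vH_ne2 h1L this.symm
    unfold q
    rw [if_neg hA, if_neg hH]
    have b1 : (if Agr L N 0 y' (atT1 L 1) then (13/50:ℝ) else 0) ≤ 13/50 := ite_le (by norm_num)
    have b2 : (if Agr L N 0 y' (atT2 L 1 K₂) then (11/50:ℝ) else 0) ≤ 11/50 := ite_le (by norm_num)
    linarith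
  · have hA : ¬ Agr L N 1 y' (atA L) := by
      refine not_agr_of_pt h1L (by omega) (by omega) ?_
      rw [hy2, vA_any h1L]; decide
    have hH : ¬ Agr L N 1 y' (atH L (K₂-1)) := by
      intro h
      have := agr_val h h1L (by omega) (by omega)
      rw [hy2] at this
      exact vH_ne2 h1L this.symm
    by_cases hT1 : Agr L N 1 y' (atT1 L 1)
    · have hT2 : ¬ Agr L N 1 y' (atT2 L 1 K₂) := fun h =>
        not_agr_T1_T2 (by omega) (by omega) (by omega) (by omega)
          (agr_trans (agr_symm hT1) h)
      unfold q
      rw [if_neg hA, if_neg hH, if_neg hT2]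
      have b1 : (if Agr L N 1 y' (atT1 L 1) then (13/50:ℝ) else 0) ≤ 13/50 := ite_le (by norm_num)
      linarith
    · unfold q
      rw [if_neg hA, if_neg hH, if_neg hT1]
      have b1 : (if Agr L N 1 y' (atT2 L 1 K₂) then (11/50:ℝ) else 0) ≤ 11/50 := ite_le (by norm_num)
      linarith

open Classical in
lemma qB_nottwo (hK2 : 2 ≤ K₂) (hK₂L : K₂ < L) (hNK : N = K₂) (h1L : 1 < L)
    (y' : Fin L → Fin 3) (hy2 : y' ⟨1, h1L⟩ ≠ 2) :
    q L N (K₂-1) 1 K₂ 0 y' ≤ 2/5 ∧ q L N (K₂-1) 1 K₂ 1 y' ≤ 2/5 := by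
  have hN2 : 2 ≤ N := by omega
  have hdh : K₂ - 1 < L := by omega
  have key : ∀ i, i ≤ 1 → q L N (K₂-1) 1 K₂ i y' ≤ 2/5 := by
    intro i hi
    have hT1 : ¬ Agr L N i y' (atT1 L 1) := by
      intro h
      have := agr_val h h1L (by omega) (by omega)
      rw [vT1_1 h1L] at this
      exact hy2 this
    have hT2 : ¬ Agr L N i y' (atT2 L 1 K₂) := by
      intro h
      have := agr_val h h1L (by omega) (by omega)
      rw [vT2_1 h1L (by omega)] at this
      exact hy2 this
    by_cases hA : Agr L N i y' (atA L)
    · have hH : ¬ Agr L N i y' (atH L (K₂-1)) := fun h =>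
        not_agr_A_H (dh := K₂-1) (by omega) (by omega) (by omega)
          (agr_trans (agr_symm hA) h)
      unfold q
      rw [if_neg hH, if_neg hT1, if_neg hT2]
      have b1 : (if Agr L N i y' (atA L) then (2/5:ℝ) else 0) ≤ 2/5 := ite_le (by norm_num)
      linarith
    · unfold q
      rw [if_neg hA, if_neg hT1, if_neg hT2]
      have b1 : (if Agr L N i y' (atH L (K₂-1)) then (3/25:ℝ) else 0) ≤ 3/25 := ite_le (by norm_num)
      linarith
  exact ⟨key 0 (by omega), key 1 (by omega)⟩

end QB
end S6
namespace S6
section Sums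

variable {L N K₂ : ℕ}

open Classical in
lemma sum_split2 (m : ℕ) (hm : 2 ≤ m) (f : ℕ → ℝ) :
    ∑ i ∈ Finset.range m, f i = f 0 + f 1 + ∑ i ∈ Finset.Ico 2 m, f i := by
  rw [Finset.range_eq_Ico, ← Finset.sum_Ico_consecutive f (by omega : 0 ≤ 2) hm]
  congr 1
  rw [← Finset.range_eq_Ico]
  rw [Finset.sum_range_succ, Finset.sum_range_one]

open Classical in
lemma sum_split1 (m : ℕ) (hm : 1 ≤ m) (f : ℕ → ℝ) :
    ∑ i ∈ Finset.range m, f i = f 0 + ∑ i ∈ Finset.Ico 1 m, f i := by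
  rw [Finset.range_eq_Ico, ← Finset.sum_Ico_consecutive f (by omega : 0 ≤ 1) hm]
  congr 1
  rw [← Finset.range_eq_Ico]
  rw [Finset.sum_range_one]

lemma sum_q_caseA (hN : 1 ≤ N) (hNL : N ≤ L) (hK2 : 2 ≤ K₂) (hK₂L : K₂ < L) (hNK : N ≠ K₂)
    (y' : Fin L → Fin 3) :
    ∑ i ∈ Finset.range (L-N+1), q L N (K₂-1) 0 K₂ i y'
      ≤ ∑ i ∈ Finset.range (L-N+1), q L N (K₂-1) 0 K₂ i (atA L) := by
  apply Finset.sum_le_sum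
  intro i _
  rcases Nat.eq_zero_or_pos i with h0 | hpos
  · subst h0; exact q0_caseA hN hNL hK2 hK₂L hNK y'
  · exact q_le_A_offtrap hpos y'

lemma sum_q_strict_A (hN : 1 ≤ N) (hNL : N ≤ L) (hK2 : 2 ≤ K₂) (hK₂L : K₂ < L) (hNK : N ≠ K₂) :
    ∑ i ∈ Finset.range (L-N+1), q L N (K₂-1) 0 K₂ i (atT1 L 0)
      < ∑ i ∈ Finset.range (L-N+1), q L N (K₂-1) 0 K₂ i (atA L) := by
  rw [sum_split1 (L-N+1) (by omega) _, sum_split1 (L-N+1) (by omega) _]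
  have hrest : ∑ i ∈ Finset.Ico 1 (L-N+1), q L N (K₂-1) 0 K₂ i (atT1 L 0)
      = ∑ i ∈ Finset.Ico 1 (L-N+1), q L N (K₂-1) 0 K₂ i (atA L) := by
    apply Finset.sum_congr rfl
    intro i hi
    have h1 : 1 ≤ i := (Finset.mem_Ico.mp hi).1
    exact q_congr (agr_symm (agr_A_T1 (by omega)))
  rw [hrest]
  have := q0_strict_A (L := L) (N := N) (K₂ := K₂) hN hNL hK2 hK₂L hNK
  linarith

lemma sum_q_caseB (hNL : N ≤ L) (hK2 : 2 ≤ K₂) (hK₂L : K₂ < L) (hNK : N = K₂)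
    (y' : Fin L → Fin 3) :
    ∑ i ∈ Finset.range (L-N+1), q L N (K₂-1) 1 K₂ i y'
      ≤ ∑ i ∈ Finset.range (L-N+1), q L N (K₂-1) 1 K₂ i (atA L) := by
  have h1L : 1 < L := by omega
  have hm2 : 2 ≤ L - N + 1 := by omega
  rw [sum_split2 (L-N+1) hm2 _, sum_split2 (L-N+1) hm2 _]
  have hrest : ∑ i ∈ Finset.Ico 2 (L-N+1), q L N (K₂-1) 1 K₂ i y'
      ≤ ∑ i ∈ Finset.Ico 2 (L-N+1), q L N (K₂-1) 1 K₂ i (atA L) := by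
    apply Finset.sum_le_sum
    intro i hi
    have h2 : 2 ≤ i := (Finset.mem_Ico.mp hi).1
    exact q_le_A_offtrap (by omega) y'
  have hA0 := q_A_lb (L := L) (N := N) (dh := K₂-1) (tb := 1) (dt := K₂) (i := 0)
  have hA1 := q_A_lb (L := L) (N := N) (dh := K₂-1) (tb := 1) (dt := K₂) (i := 1)
  by_cases hy2 : y' ⟨1, h1L⟩ = 2
  · obtain ⟨b0, b1⟩ := qB_two hK2 hK₂L hNK h1L y' hy2
    linarith
  · obtain ⟨b0, b1⟩ := qB_nottwo hK2 hK₂L hNK h1L y' hy2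
    linarith

lemma sum_q_strict_B (hNL : N ≤ L) (hK2 : 2 ≤ K₂) (hK₂L : K₂ < L) (hNK : N = K₂) :
    ∑ i ∈ Finset.range (L-N+1), q L N (K₂-1) 1 K₂ i (atT1 L 1)
      < ∑ i ∈ Finset.range (L-N+1), q L N (K₂-1) 1 K₂ i (atA L) := by
  have h1L : 1 < L := by omega
  have hm2 : 2 ≤ L - N + 1 := by omega
  rw [sum_split2 (L-N+1) hm2 _, sum_split2 (L-N+1) hm2 _]
  have hrest : ∑ i ∈ Finset.Ico 2 (L-N+1), q L N (K₂-1) 1 K₂ i (atT1 L 1)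
      = ∑ i ∈ Finset.Ico 2 (L-N+1), q L N (K₂-1) 1 K₂ i (atA L) := by
    apply Finset.sum_congr rfl
    intro i hi
    have h2 : 2 ≤ i := (Finset.mem_Ico.mp hi).1
    exact q_congr (agr_symm (agr_A_T1 (by omega)))
  rw [hrest]
  obtain ⟨b0, b1⟩ := qB_two hK2 hK₂L hNK h1L (atT1 L 1) (vT1_1 h1L)
  have hA0 := q_A_lb (L := L) (N := N) (dh := K₂-1) (tb := 1) (dt := K₂) (i := 0)
  have hA1 := q_A_lb (L := L) (N := N) (dh := K₂-1) (tb := 1) (dt := K₂) (i := 1)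
  linarith

end Sums
end S6
namespace S6
open Classical in
lemma assemble {L K₁ K₂ T₁ T₂ N : ℕ} (tb : ℕ) (htb : tb < K₂)
    (hK₁ : 1 ≤ K₁) (hK₁L : K₁ < L) (hK₂L : K₂ < L) (hKK : K₁ < K₂)
    (hT₁ : 1 ≤ T₁) (hT₁K : T₁ ≤ K₁) (hT₂ : 1 ≤ T₂) (hT₂K : T₂ ≤ K₂)
    (hopt : ∀ y' : Fin L → Fin 3,
      ∑ i ∈ Finset.range (L-N+1), q L N (K₂-1) tb K₂ i y'
        ≤ ∑ i ∈ Finset.range (L-N+1), q L N (K₂-1) tb K₂ i (atA L))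
    (hstrict : ∑ i ∈ Finset.range (L-N+1), q L N (K₂-1) tb K₂ i (atT1 L tb)
        < ∑ i ∈ Finset.range (L-N+1), q L N (K₂-1) tb K₂ i (atA L)) :
    ∃ p : (Fin L → Fin 3) → ℝ,
      (∀ y, 0 ≤ p y) ∧ (∑ y, p y = 1) ∧
      TieFree K₁ T₁ p ∧ TieFree K₂ T₂ p ∧
      ∃ y₁ y₂ : Fin L → Fin 3,
        IsLookahead K₁ T₁ p y₁ ∧ IsLookahead K₂ T₂ p y₂ ∧
        (∀ y' : Fin L → Fin 3,
          ∑ y, p y * ngramLoss N y₁ y ≤ ∑ y, p y * ngramLoss N y' y) ∧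
        ¬ (∀ y' : Fin L → Fin 3,
          ∑ y, p y * ngramLoss N y₂ y ≤ ∑ y, p y * ngramLoss N y' y) := by
  have hdenA := hden_A (L := L) tb (K₂-1) K₂
  have hnumA := hnum_A (L := L) K₁ K₂ tb hK₁ hKK hK₂L
  have hdenT := hden_T1 (L := L) tb (K₂-1) K₂
  have hnumT := hnum_T1 (L := L) K₁ K₂ tb hK₁ hKK hK₂L htb
  refine ⟨pp L (K₂-1) tb K₂, pp_nonneg _ _ _ _, sum_pp _ _ _ _,
    tiefree K₁ T₁ _ (atA L) hdenA hnumA hT₁K,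
    tiefree K₂ T₂ _ (atT1 L tb) hdenT hnumT hT₂K,
    atA L, atT1 L tb,
    islook K₁ T₁ _ (atA L) hdenA hnumA hT₁ hT₁K,
    islook K₂ T₂ _ (atT1 L tb) hdenT hnumT hT₂ hT₂K, ?_, ?_⟩
  · intro y'
    rw [exp_loss_eq, exp_loss_eq, Finset.sum_sub_distrib, Finset.sum_sub_distrib]
    exact sub_le_sub_left (hopt y') _
  · intro hctr
    have h := hctr (atA L)
    rw [exp_loss_eq, exp_loss_eq, Finset.sum_sub_distrib, Finset.sum_sub_distrib] at h
    have : ∑ i ∈ Finset.range (L-N+1), q L N (K₂-1) tb K₂ i (atA L)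
        ≤ ∑ i ∈ Finset.range (L-N+1), q L N (K₂-1) tb K₂ i (atT1 L tb) := by linarith
    linarith

end S6

theorem stmt6 {L K₁ K₂ T₁ T₂ N : ℕ}
    (hK₁ : 1 ≤ K₁) (hK₁L : K₁ < L) (hK₂L : K₂ < L) (hKK : K₁ < K₂)
    (hT₁ : 1 ≤ T₁) (hT₁K : T₁ ≤ K₁) (hT₂ : 1 ≤ T₂) (hT₂K : T₂ ≤ K₂)
    (hN : 1 ≤ N) (hNL : N ≤ L) :
    ∃ p : (Fin L → Fin 3) → ℝ,
      (∀ y, 0 ≤ p y) ∧ (∑ y, p y = 1) ∧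
      TieFree K₁ T₁ p ∧ TieFree K₂ T₂ p ∧
      ∃ y₁ y₂ : Fin L → Fin 3,
        IsLookahead K₁ T₁ p y₁ ∧ IsLookahead K₂ T₂ p y₂ ∧
        (∀ y' : Fin L → Fin 3,
          ∑ y, p y * ngramLoss N y₁ y ≤ ∑ y, p y * ngramLoss N y' y) ∧
        ¬ (∀ y' : Fin L → Fin 3,
          ∑ y, p y * ngramLoss N y₂ y ≤ ∑ y, p y * ngramLoss N y' y) := by
  have hK2 : 2 ≤ K₂ := by omega
  by_cases hNK : N = K₂
  · exact S6.assemble 1 (by omega) hK₁ hK₁L hK₂L hKK hT₁ hT₁K hT₂ hT₂K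
      (S6.sum_q_caseB hNL hK2 hK₂L hNK) (S6.sum_q_strict_B hNL hK2 hK₂L hNK)
  · exact S6.assemble 0 (by omega) hK₁ hK₁L hK₂L hKK hT₁ hT₁K hT₂ hT₂K
      (S6.sum_q_caseA hN hNL hK2 hK₂L hNK) (S6.sum_q_strict_A hN hNL hK2 hK₂L hNK)
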